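/- arXiv:2103.04678 — 2 statements merged into one kernel-verified Lean document; each statement's English description precedes it below -/
import Mathlib

section
/- Let A = Σ_{j=2}^p λ_j w_j w_j' + w_1 w_1' C be a p×p real matrix, where λ_2, …, λ_p are nonzero reals, w_1, …, w_p form an orthonormal set of vectors in ℝ^p, and C is a symmetric positive definite p×p matrix. Then A is invertible, and its inverse is A^{-1} = B^† + (w_1' C w_1)^{-1} w_1 w_1' (I_p − C B^†), where B = Σ_{j=2}^p λ_j w_j w_j' and B^† = Σ_{j=2}^p λ_j^{-1} w_j w_j' is the Moore–Penrose pseudoinverse of B. -/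
open Matrix

section aux
variable {p : ℕ}

lemma vmv_mul_vmv (a b c d : Fin p → ℝ) :
    vecMulVec a b * vecMulVec c d = (b ⬝ᵥ c) • vecMulVec a d := by
  ext i j
  simp only [mul_apply, vecMulVec_apply, Matrix.smul_apply, dotProduct, smul_eq_mul,
    Finset.sum_mul]
  apply Finset.sum_congr rfl
  intro k _; ring

lemma vmv_mul (a b : Fin p → ℝ) (M : Matrix (Fin p) (Fin p) ℝ) :
    vecMulVec a b * M = vecMulVec a (M.vecMul b) := by
  ext i j
  simp only [mul_apply, vecMulVec_apply, vecMul, dotProduct, Finset.mul_sum]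
  apply Finset.sum_congr rfl
  intro k _; ring

end aux

/-- inversion of a rank-structured matrix. -/
theorem stmt_0 (p : ℕ) [NeZero p]
    (w : Fin p → (Fin p → ℝ)) (lam : Fin p → ℝ)
    (hlam : ∀ j : Fin p, j ≠ 0 → lam j ≠ 0)
    (hw : ∀ i j : Fin p, w i ⬝ᵥ w j = if i = j then 1 else 0)
    (C : Matrix (Fin p) (Fin p) ℝ) (hC : C.PosDef) (hCsymm : C.IsSymm)
    (B Bd A : Matrix (Fin p) (Fin p) ℝ)
    (hB : B = ∑ j ∈ Finset.univ.erase (0 : Fin p), lam j • vecMulVec (w j) (w j))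
    (hBd : Bd = ∑ j ∈ Finset.univ.erase (0 : Fin p), (lam j)⁻¹ • vecMulVec (w j) (w j))
    (hA : A = B + vecMulVec (w 0) (w 0) * C) :
    IsUnit A ∧
      A⁻¹ = Bd + (w 0 ⬝ᵥ C.mulVec (w 0))⁻¹ •
        (vecMulVec (w 0) (w 0) * (1 - C * Bd)) := by
  set W : Matrix (Fin p) (Fin p) ℝ := vecMulVec (w 0) (w 0) with hWdef
  set c : ℝ := w 0 ⬝ᵥ C.mulVec (w 0) with hcdef
  -- w 0 ≠ 0
  have hw0 : w 0 ≠ 0 := by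
    intro h
    have := hw 0 0
    rw [h] at this
    simp at this
  have hc0 : c ≠ 0 := by
    have := hC.dotProduct_mulVec_pos hw0
    simp only [star_trivial] at this
    exact ne_of_gt this
  -- completeness : the orthonormal set is a basis
  have hU1 : (Matrix.of w) * (Matrix.of w)ᵀ = 1 := by
    ext i j
    simpa [Matrix.mul_apply, dotProduct, Matrix.one_apply] using hw i j
  have hU2 : (Matrix.of w)ᵀ * (Matrix.of w) = 1 := mul_eq_one_comm.mp hU1
  have hsum : ∑ j : Fin p, vecMulVec (w j) (w j) = 1 := by
    rw [← hU2]
    ext i k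
    simp [Matrix.mul_apply, vecMulVec_apply, Matrix.sum_apply]
  have hQ : ∑ j ∈ Finset.univ.erase (0 : Fin p), vecMulVec (w j) (w j) = 1 - W := by
    have := Finset.add_sum_erase Finset.univ (fun j => vecMulVec (w j) (w j))
      (Finset.mem_univ (0 : Fin p))
    rw [hsum] at this
    rw [← this]; abel
  -- B * Bd = 1 - W
  have hBBd : B * Bd = 1 - W := by
    rw [hB, hBd, Finset.sum_mul, ← hQ]
    apply Finset.sum_congr rfl
    intro j hj
    rw [Finset.mul_sum, Finset.sum_eq_single j]
    · rw [smul_mul_assoc, mul_smul_comm, vmv_mul_vmv, hw j j, if_pos rfl, one_smul,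
        smul_smul, mul_inv_cancel₀ (hlam j (Finset.ne_of_mem_erase hj)), one_smul]
    · intro k _ hkj
      rw [smul_mul_assoc, mul_smul_comm, vmv_mul_vmv, hw j k, if_neg (Ne.symm hkj)]
      simp
    · intro h; exact absurd hj h
  -- B * W = 0
  have hBW : B * W = 0 := by
    rw [hB, Finset.sum_mul]
    apply Finset.sum_eq_zero
    intro j hj
    rw [smul_mul_assoc, hWdef, vmv_mul_vmv, hw j 0,
      if_neg (Finset.ne_of_mem_erase hj)]
    simp
  -- W * C * W = c • W
  have hWCW : W * C * W = c • W := by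
    rw [hWdef, vmv_mul, vmv_mul_vmv, hcdef, dotProduct_mulVec]
  set M : Matrix (Fin p) (Fin p) ℝ := Bd + c⁻¹ • (W * (1 - C * Bd)) with hMdef
  have hmul : A * M = 1 := by
    have expand : A * M = B * Bd + c⁻¹ • (B * (W * (1 - C * Bd)))
        + (W * (C * Bd) + c⁻¹ • (W * (C * (W * (1 - C * Bd))))) := by
      rw [hA, hMdef]
      simp only [mul_add, add_mul, mul_smul_comm, smul_add, mul_assoc]
      abel
    have e2 : W * (C * (W * (1 - C * Bd))) = W * C * W * (1 - C * Bd) := by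
      rw [mul_assoc, mul_assoc]
    have e3 : B * (W * (1 - C * Bd)) = 0 := by rw [← mul_assoc, hBW, zero_mul]
    rw [expand, hBBd, e2, e3, smul_zero, add_zero, hWCW, smul_mul_assoc,
      smul_smul, inv_mul_cancel₀ hc0, one_smul, mul_sub, mul_one]
    abel
  exact ⟨(Matrix.isUnit_iff_isUnit_det A).mpr (Matrix.isUnit_det_of_right_inverse hmul), Matrix.inv_eq_right_inv hmul⟩
end

section
/- Under the two-component Gaussian mixture model x ∼ α_1 N_p(μ_1, Σ) + α_2 N_p(μ_2, Σ) with α_1 + α_2 = 1, α_1, α_2 > 0, μ_1 ≠ μ_2, Σ positive definite, and α_1 ∉ {1/2 − 1/√12, 1/2 + 1/√12}: the squared excess kurtosis u ↦ (κ(u) − 3)^2 over unit vectors u, where κ(u) = E[(u'(x − Ex))^4]/(E[(u'(x − Ex))^2])^2, is uniquely maximized at u = ± θ/‖θ‖, where θ = Σ^{-1}(μ_2 − μ_1). -/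
open MeasureTheory ProbabilityTheory Matrix
open scoped ENNReal NNReal Real

/-! ### Auxiliary lemmas: moments of the standard Gaussian -/

lemma aux_integrable_pow_mul_exp (n : ℕ) {b : ℝ} (hb : 0 < b) :
    Integrable (fun x : ℝ => x ^ n * Real.exp (-b * x ^ 2)) := by
  have := integrable_rpow_mul_exp_neg_mul_sq hb (s := (n : ℝ))
    (lt_of_lt_of_le (by norm_num) (Nat.cast_nonneg n))
  simpa [Real.rpow_natCast] using this

lemma aux_gauss_int_odd (n : ℕ) (hn : Odd n) :
    ∫ x : ℝ, x ^ n * Real.exp (-(1/2) * x ^ 2) = 0 := by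
  have h := integral_neg_eq_self (fun x : ℝ => x ^ n * Real.exp (-(1/2) * x ^ 2)) volume
  have h2 : ∀ x : ℝ, (-x) ^ n * Real.exp (-(1/2) * (-x) ^ 2)
      = -(x ^ n * Real.exp (-(1/2) * x ^ 2)) := by
    intro x; rw [hn.neg_pow, neg_sq]; ring
  simp_rw [h2, integral_neg] at h
  linarith

lemma aux_gauss_int_rec (n : ℕ) :
    ∫ x : ℝ, x ^ (n+2) * Real.exp (-(1/2) * x ^ 2)
      = (n+1) * ∫ x : ℝ, x ^ n * Real.exp (-(1/2) * x ^ 2) := by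
  have hderiv : ∀ x : ℝ, HasDerivAt (fun x : ℝ => -(x ^ (n+1) * Real.exp (-(1/2) * x ^ 2)))
      (x ^ (n+2) * Real.exp (-(1/2) * x ^ 2) - (n+1) * (x ^ n * Real.exp (-(1/2) * x ^ 2))) x := by
    intro x
    have h1 : HasDerivAt (fun x : ℝ => x ^ (n+1)) ((n+1) * x ^ n) x := by
      simpa using hasDerivAt_pow (n+1) x
    have h2 : HasDerivAt (fun x : ℝ => Real.exp (-(1/2) * x ^ 2))
        (Real.exp (-(1/2) * x ^ 2) * (-(1/2) * (2 * x))) x := by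
      have : HasDerivAt (fun x : ℝ => -(1/2 : ℝ) * x ^ 2) (-(1/2) * (2 * x)) x := by
        simpa using (hasDerivAt_pow 2 x).const_mul (-(1/2 : ℝ))
      exact this.exp
    have := (h1.mul h2).neg
    exact this.congr_deriv (by ring)
  have hint : Integrable (fun x : ℝ => x ^ (n+2) * Real.exp (-(1/2) * x ^ 2)
      - (n+1) * (x ^ n * Real.exp (-(1/2) * x ^ 2))) := by
    exact (aux_integrable_pow_mul_exp (n+2) (by norm_num)).sub
      ((aux_integrable_pow_mul_exp n (by norm_num)).const_mul _)
  have hintf : Integrable (fun x : ℝ => -(x ^ (n+1) * Real.exp (-(1/2) * x ^ 2))) :=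
    (aux_integrable_pow_mul_exp (n+1) (by norm_num)).neg
  have h0 := integral_eq_zero_of_hasDerivAt_of_integrable hderiv hint hintf
  rw [integral_sub (aux_integrable_pow_mul_exp (n+2) (by norm_num))
    ((aux_integrable_pow_mul_exp n (by norm_num)).const_mul _), integral_const_mul] at h0
  linarith

lemma aux_pdf_std (x : ℝ) : gaussianPDFReal 0 1 x
    = (Real.sqrt (2 * π))⁻¹ * Real.exp (-(1/2) * x ^ 2) := by
  rw [gaussianPDFReal]
  norm_num
  left; congr 1; ring

lemma aux_integral_gaussianReal_std (f : ℝ → ℝ) :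
    ∫ x, f x ∂(gaussianReal 0 1) =
      (Real.sqrt (2 * π))⁻¹ * ∫ x, f x * Real.exp (-(1/2) * x ^ 2) := by
  rw [gaussianReal_of_var_ne_zero 0 one_ne_zero]
  have hmeas : Measurable fun x => (gaussianPDFReal 0 1 x).toNNReal :=
    (measurable_gaussianPDFReal 0 1).real_toNNReal
  have h : (gaussianPDF 0 1) = fun x => (((gaussianPDFReal 0 1 x).toNNReal : ℝ≥0) : ℝ≥0∞) := by
    funext x; rw [gaussianPDF]; rfl
  rw [h, integral_withDensity_eq_integral_smul hmeas]
  rw [← integral_const_mul]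
  congr 1; funext x
  rw [NNReal.smul_def, smul_eq_mul, Real.coe_toNNReal _ (gaussianPDFReal_nonneg 0 1 x), aux_pdf_std]
  ring

lemma aux_integrable_gaussianReal_iff (f : ℝ → ℝ) :
    Integrable f (gaussianReal 0 1) ↔
      Integrable (fun x => f x * Real.exp (-(1/2) * x ^ 2)) volume := by
  rw [gaussianReal_of_var_ne_zero 0 one_ne_zero]
  have hmeas : Measurable fun x => (gaussianPDFReal 0 1 x).toNNReal :=
    (measurable_gaussianPDFReal 0 1).real_toNNReal
  have h : (gaussianPDF 0 1) = fun x => (((gaussianPDFReal 0 1 x).toNNReal : ℝ≥0) : ℝ≥0∞) := by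
    funext x; rw [gaussianPDF]; rfl
  rw [h, integrable_withDensity_iff_integrable_smul hmeas]
  have h2 : ∀ x : ℝ, (gaussianPDFReal 0 1 x).toNNReal • f x
      = (Real.sqrt (2 * π))⁻¹ * (f x * Real.exp (-(1/2) * x ^ 2)) := by
    intro x
    rw [NNReal.smul_def, smul_eq_mul, Real.coe_toNNReal _ (gaussianPDFReal_nonneg 0 1 x),
      aux_pdf_std]
    ring
  simp_rw [h2]
  rw [integrable_const_mul_iff (IsUnit.mk0 _ (by positivity))]

/-- moments of the standard gaussian -/
noncomputable def gm : ℕ → ℝ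
  | 0 => 1
  | 1 => 0
  | (n+2) => (n+1) * gm n

lemma aux_integrable_pow_gaussian (n : ℕ) :
    Integrable (fun x : ℝ => x ^ n) (gaussianReal 0 1) :=
  (aux_integrable_gaussianReal_iff _).2 (aux_integrable_pow_mul_exp n (by norm_num))

lemma aux_integral_pow_gaussian : ∀ n : ℕ, ∫ x, x ^ n ∂(gaussianReal 0 1) = gm n := by
  have base : ∀ n : ℕ, ∫ x, (x:ℝ) ^ n ∂(gaussianReal 0 1)
      = (Real.sqrt (2 * π))⁻¹ * ∫ x : ℝ, x ^ n * Real.exp (-(1/2) * x ^ 2) :=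
    fun n => aux_integral_gaussianReal_std _
  intro n
  induction n using Nat.strong_induction_on with
  | _ n ih =>
    match n with
    | 0 => simp [gm]
    | 1 => rw [base, aux_gauss_int_odd 1 odd_one, gm]; simp
    | (n+2) =>
      rw [base, aux_gauss_int_rec n, gm, ← mul_assoc, mul_comm ((Real.sqrt (2*π))⁻¹) ((n:ℝ)+1),
        mul_assoc, ← base n, ih n (by omega)]

/-! ### Moments of linear functionals under the standard Gaussian product measure -/

/-- moments of a centered gaussian with variance `t`, for `k ≤ 4`. -/
noncomputable def pm : ℕ → ℝ → ℝ
  | 0, _ => 1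
  | 1, _ => 0
  | 2, t => t
  | 3, _ => 0
  | 4, t => 3 * t ^ 2
  | _, _ => 0

lemma aux_pi_moments (n : ℕ) : ∀ (v : Fin n → ℝ) (k : ℕ), k ≤ 4 →
    Integrable (fun w : Fin n → ℝ => (∑ i, v i * w i) ^ k)
      (Measure.pi fun _ => gaussianReal 0 1) ∧
    ∫ w, (∑ i, v i * w i) ^ k ∂(Measure.pi fun _ => gaussianReal 0 1)
      = pm k (∑ i, v i ^ 2) := by
  induction n with
  | zero =>
    intro v k hk
    have h0 : ∀ w : Fin 0 → ℝ, (∑ i, v i * w i) = 0 := by simp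
    simp_rw [h0]
    constructor
    · exact integrable_const _
    · rw [integral_const]
      simp only [measure_univ, ENNReal.toReal_one, smul_eq_mul, one_mul]
      have : (∑ i : Fin 0, v i ^ 2) = 0 := by simp
      rw [this]
      interval_cases k <;> simp [pm]
  | succ n ih =>
    intro v k hk
    set γ := gaussianReal 0 1
    set πn : Measure (Fin n → ℝ) := Measure.pi fun _ => γ with hπn
    set a := v 0
    set vt : Fin n → ℝ := fun i => v i.succ with hvt
    have hmp := measurePreserving_piFinSuccAbove (fun _ : Fin (n+1) => γ) 0
    set e := MeasurableEquiv.piFinSuccAbove (fun _ : Fin (n+1) => ℝ) 0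
    set g : ℝ × (Fin n → ℝ) → ℝ := fun z => (a * z.1 + ∑ i, vt i * z.2 i) ^ k with hg
    have hge : ∀ w : Fin (n+1) → ℝ, (∑ i, v i * w i) ^ k = g (e w) := by
      intro w
      rw [hg]
      simp only [e, MeasurableEquiv.piFinSuccAbove_apply]
      rw [Fin.sum_univ_succ]
      congr 1
    have hterm_int : ∀ j ∈ Finset.range (k+1),
        Integrable (fun z : ℝ × (Fin n → ℝ) =>
          (a * z.1) ^ j * (∑ i, vt i * z.2 i) ^ (k - j) * ((k.choose j : ℝ)))
          (γ.prod πn) := by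
      intro j hj
      have h1 : Integrable (fun x : ℝ => (a * x) ^ j) γ := by
        simp_rw [mul_pow]
        exact (aux_integrable_pow_gaussian j).const_mul _
      have h2 := (ih vt (k - j) (by omega)).1
      exact (h1.mul_prod h2).mul_const _
    have hgint : Integrable g (γ.prod πn) := by
      have : g = fun z => ∑ j ∈ Finset.range (k+1),
          (a * z.1) ^ j * (∑ i, vt i * z.2 i) ^ (k - j) * ((k.choose j : ℝ)) := by
        funext z; exact add_pow _ _ _
      rw [this]
      exact integrable_finset_sum _ hterm_int
    constructor
    · have heq : (fun w : Fin (n+1) → ℝ => (∑ i, v i * w i) ^ k) = g ∘ e := by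
        funext w; exact hge w
      rw [heq]
      exact (hmp.integrable_comp_emb e.measurableEmbedding).2 hgint
    · have hcomp : ∫ w, (∑ i, v i * w i) ^ k ∂(Measure.pi fun _ : Fin (n+1) => γ)
          = ∫ z, g z ∂(γ.prod πn) := by
        rw [← hmp.map_eq, integral_map hmp.measurable.aemeasurable
          (hmp.map_eq.symm ▸ hgint.1)]
        simp_rw [hge]
      rw [hcomp]
      have hexp : ∫ z, g z ∂(γ.prod πn) = ∑ j ∈ Finset.range (k+1),
          ((k.choose j : ℝ)) * (a ^ j * gm j) * pm (k - j) (∑ i, vt i ^ 2) := by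
        have : g = fun z => ∑ j ∈ Finset.range (k+1),
            (a * z.1) ^ j * (∑ i, vt i * z.2 i) ^ (k - j) * ((k.choose j : ℝ)) := by
          funext z; exact add_pow _ _ _
        rw [this, integral_finset_sum _ hterm_int]
        refine Finset.sum_congr rfl fun j hj => ?_
        rw [MeasureTheory.integral_mul_const]
        have h12 := integral_prod_mul (μ := γ) (ν := πn) (fun x : ℝ => (a * x) ^ j)
          (fun y : Fin n → ℝ => (∑ i, vt i * y i) ^ (k - j))
        rw [h12]
        have h1 : ∫ x, (a * x) ^ j ∂γ = a ^ j * gm j := by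
          simp_rw [mul_pow]
          rw [MeasureTheory.integral_const_mul, aux_integral_pow_gaussian]
        rw [h1, (ih vt (k - j) (by omega)).2]
        ring
      rw [hexp]
      have hsum : (∑ i : Fin (n+1), v i ^ 2) = a ^ 2 + ∑ i, vt i ^ 2 := by
        rw [Fin.sum_univ_succ]
      rw [hsum]
      set t := ∑ i, vt i ^ 2
      interval_cases k <;>
        simp [Finset.sum_range_succ, pm, gm, Nat.choose] <;> ring

/-- moments of `b + N(0,t)`, for `k ≤ 4`. -/
noncomputable def sm : ℕ → ℝ → ℝ → ℝ
  | 0, _, _ => 1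
  | 1, b, _ => b
  | 2, b, t => b ^ 2 + t
  | 3, b, t => b ^ 3 + 3 * b * t
  | 4, b, t => b ^ 4 + 6 * b ^ 2 * t + 3 * t ^ 2
  | _, _, _ => 0

lemma aux_shift_moments (n : ℕ) (v : Fin n → ℝ) (b : ℝ) (k : ℕ) (hk : k ≤ 4) :
    Integrable (fun w : Fin n → ℝ => (b + ∑ i, v i * w i) ^ k)
      (Measure.pi fun _ => gaussianReal 0 1) ∧
    ∫ w, (b + ∑ i, v i * w i) ^ k ∂(Measure.pi fun _ => gaussianReal 0 1)
      = sm k b (∑ i, v i ^ 2) := by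
  set Pn := Measure.pi fun _ : Fin n => gaussianReal 0 1
  have hexp : (fun w : Fin n → ℝ => (b + ∑ i, v i * w i) ^ k)
      = fun w => ∑ j ∈ Finset.range (k+1),
        b ^ j * ((∑ i, v i * w i) ^ (k - j) * (k.choose j : ℝ)) := by
    funext w
    rw [add_pow]
    refine Finset.sum_congr rfl fun j hj => ?_
    ring
  have hterm : ∀ j ∈ Finset.range (k+1),
      Integrable (fun w : Fin n → ℝ =>
        b ^ j * ((∑ i, v i * w i) ^ (k - j) * (k.choose j : ℝ))) Pn := by
    intro j hj
    exact (((aux_pi_moments n v (k - j) (by omega)).1.mul_const _).const_mul _)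
  constructor
  · rw [hexp]; exact integrable_finset_sum _ hterm
  · rw [hexp, integral_finset_sum _ hterm]
    have : ∀ j ∈ Finset.range (k+1),
        ∫ w, b ^ j * ((∑ i, v i * w i) ^ (k - j) * (k.choose j : ℝ)) ∂Pn
          = b ^ j * (pm (k - j) (∑ i, v i ^ 2) * (k.choose j : ℝ)) := by
      intro j hj
      rw [MeasureTheory.integral_const_mul, MeasureTheory.integral_mul_const,
        (aux_pi_moments n v (k - j) (by omega)).2]
    rw [Finset.sum_congr rfl this]
    set t := ∑ i, v i ^ 2
    interval_cases k <;> simp [Finset.sum_range_succ, pm, sm, Nat.choose] <;> ring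

/-- The positive semidefinite square root of a positive semidefinite matrix
(the definition Mathlib had in December 2024, since removed). -/
noncomputable def Matrix.PosSemidef.sqrt {n : Type*} [Fintype n] [DecidableEq n]
    {A : Matrix n n ℝ} (hA : A.PosSemidef) : Matrix n n ℝ :=
  hA.1.eigenvectorUnitary.1 * diagonal ((√·) ∘ hA.1.eigenvalues) *
  (star hA.1.eigenvectorUnitary : Matrix n n ℝ)

lemma Matrix.PosSemidef.posSemidef_sqrt {n : Type*} [Fintype n] [DecidableEq n]
    {A : Matrix n n ℝ} (hA : A.PosSemidef) : hA.sqrt.PosSemidef := by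
  unfold Matrix.PosSemidef.sqrt
  have hD : (diagonal ((√·) ∘ hA.1.eigenvalues)).PosSemidef :=
    Matrix.PosSemidef.diagonal (fun i => Real.sqrt_nonneg _)
  have := hD.mul_mul_conjTranspose_same (hA.1.eigenvectorUnitary : Matrix n n ℝ)
  simpa [Matrix.star_eq_conjTranspose] using this

lemma Matrix.PosSemidef.sqrt_mul_self {n : Type*} [Fintype n] [DecidableEq n]
    {A : Matrix n n ℝ} (hA : A.PosSemidef) : hA.sqrt * hA.sqrt = A := by
  unfold Matrix.PosSemidef.sqrt
  have hU : (star hA.1.eigenvectorUnitary : Matrix n n ℝ) * hA.1.eigenvectorUnitary.1 = 1 :=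
    Unitary.star_mul_self_of_mem hA.1.eigenvectorUnitary.2
  have hDD : diagonal ((√·) ∘ hA.1.eigenvalues) * diagonal ((√·) ∘ hA.1.eigenvalues)
      = diagonal (RCLike.ofReal ∘ hA.1.eigenvalues) := by
    rw [diagonal_mul_diagonal]
    congr 1; funext i
    simp [Real.mul_self_sqrt (hA.eigenvalues_nonneg i)]
  calc _ = hA.1.eigenvectorUnitary.1 * (diagonal ((√·) ∘ hA.1.eigenvalues)
        * ((star hA.1.eigenvectorUnitary : Matrix n n ℝ) * hA.1.eigenvectorUnitary.1)
        * diagonal ((√·) ∘ hA.1.eigenvalues)) * (star hA.1.eigenvectorUnitary : Matrix n n ℝ) := by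
        simp only [Matrix.mul_assoc]
    _ = A := by
        rw [hU, Matrix.mul_one, hDD]
        conv_rhs => rw [hA.1.spectral_theorem]
        simp [Unitary.conjStarAlgAut_apply, Matrix.mul_assoc]

/-- A `p`-variate Gaussian measure with mean `m` and covariance `S` (positive semidefinite),
realized as the pushforward of a standard Gaussian by `w ↦ m + S^{1/2} w`. -/
noncomputable def mvGaussian {p : ℕ} (m : Fin p → ℝ) {S : Matrix (Fin p) (Fin p) ℝ}
    (hS : S.PosSemidef) : Measure (Fin p → ℝ) :=
  (Measure.pi fun _ : Fin p => gaussianReal 0 1).map fun w => m + hS.sqrt.mulVec w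

lemma aux_mvGaussian_moments {p : ℕ} (m : Fin p → ℝ) {S : Matrix (Fin p) (Fin p) ℝ}
    (hS : S.PosSemidef) (u : Fin p → ℝ) (c : ℝ) (k : ℕ) (hk : k ≤ 4) :
    Integrable (fun z => (u ⬝ᵥ z + c) ^ k) (mvGaussian m hS) ∧
    ∫ z, (u ⬝ᵥ z + c) ^ k ∂(mvGaussian m hS) = sm k (u ⬝ᵥ m + c) (u ⬝ᵥ S.mulVec u) := by
  set A := hS.sqrt with hA
  have hAsymm : Aᵀ = A := by
    have h := hS.posSemidef_sqrt.1
    rw [Matrix.IsHermitian] at h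
    simpa [Matrix.conjTranspose_eq_transpose_of_trivial] using h
  set v := A.mulVec u with hv
  have hT : Measurable fun w : Fin p → ℝ => m + A.mulVec w := by
    have : Continuous fun w : Fin p → ℝ => A.mulVec w := by
      have := (Matrix.mulVecLin A).continuous_of_finiteDimensional
      exact this
    exact (continuous_const.add this).measurable
  have hkey : ∀ w : Fin p → ℝ, u ⬝ᵥ (m + A.mulVec w) + c
      = (u ⬝ᵥ m + c) + ∑ i, v i * w i := by
    intro w
    have h1 : u ⬝ᵥ (A.mulVec w) = v ⬝ᵥ w := by
      rw [dotProduct_mulVec, ← mulVec_transpose, hAsymm]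
    rw [dotProduct_add, h1]
    simp [dotProduct]
    ring
  have hvar : (∑ i, v i ^ 2) = u ⬝ᵥ S.mulVec u := by
    have h1 : u ⬝ᵥ S.mulVec u = v ⬝ᵥ v := by
      conv_lhs => rw [← hS.sqrt_mul_self, ← mulVec_mulVec, dotProduct_mulVec,
        ← mulVec_transpose, hAsymm]
    rw [h1]
    simp [dotProduct, pow_two]
  have hasm : AEStronglyMeasurable (fun z : Fin p → ℝ => (u ⬝ᵥ z + c) ^ k)
      (mvGaussian m hS) := by
    apply Continuous.aestronglyMeasurable
    have : Continuous fun z : Fin p → ℝ => u ⬝ᵥ z := by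
      simp only [dotProduct]
      exact continuous_finset_sum _ fun i _ => continuous_const.mul (continuous_apply i)
    exact ((this.add continuous_const).pow k)
  constructor
  · rw [mvGaussian, integrable_map_measure hasm hT.aemeasurable]
    have : ((fun z : Fin p → ℝ => (u ⬝ᵥ z + c) ^ k) ∘ fun w => m + A.mulVec w)
        = fun w => ((u ⬝ᵥ m + c) + ∑ i, v i * w i) ^ k := by
      funext w; simp only [Function.comp_apply, hkey w]
    rw [this]
    exact (aux_shift_moments p v _ k hk).1
  · rw [mvGaussian, integral_map hT.aemeasurable hasm]
    simp_rw [hkey]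
    rw [(aux_shift_moments p v _ k hk).2, hvar]

lemma aux_integrable_id_mvGaussian {p : ℕ} (m : Fin p → ℝ) {S : Matrix (Fin p) (Fin p) ℝ}
    (hS : S.PosSemidef) : Integrable (fun z : Fin p → ℝ => z) (mvGaussian m hS) := by
  have hT : Measurable fun w : Fin p → ℝ => m + hS.sqrt.mulVec w := by
    have : Continuous fun w : Fin p → ℝ => hS.sqrt.mulVec w := by
      have := (Matrix.mulVecLin hS.sqrt).continuous_of_finiteDimensional
      exact this
    exact (continuous_const.add this).measurable
  rw [mvGaussian, show (fun z : Fin p → ℝ => z) = id from rfl,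
    integrable_map_measure aestronglyMeasurable_id hT.aemeasurable]
  simp only [Function.comp_def, id]
  have hrow : ∀ i : Fin p, Integrable
      (fun w : Fin p → ℝ => |∑ j, hS.sqrt i j * w j|) (Measure.pi fun _ => gaussianReal 0 1) := by
    intro i
    have := (aux_pi_moments p (fun j => hS.sqrt i j) 1 (by norm_num)).1
    simp_rw [pow_one] at this
    exact this.abs
  have hg : Integrable (fun w : Fin p → ℝ => ‖m‖ + ∑ i, |∑ j, hS.sqrt i j * w j|)
      (Measure.pi fun _ => gaussianReal 0 1) :=
    (integrable_const _).add (integrable_finset_sum _ fun i _ => hrow i)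
  refine Integrable.mono' hg ?_ ?_
  · exact (hT.comp measurable_id).aestronglyMeasurable
  · refine Filter.Eventually.of_forall fun w => ?_
    have hnn : (0:ℝ) ≤ ‖m‖ + ∑ i, |∑ j, hS.sqrt i j * w j| := by
      have : (0:ℝ) ≤ ∑ i, |∑ j, hS.sqrt i j * w j| :=
        Finset.sum_nonneg fun i _ => abs_nonneg _
      positivity
    refine (pi_norm_le_iff_of_nonneg hnn).2 fun i => ?_
    have h1 : ‖(m + hS.sqrt.mulVec w) i‖ = |m i + ∑ j, hS.sqrt i j * w j| := by
      simp [Matrix.mulVec, dotProduct]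
    rw [h1]
    have h2 : |m i| ≤ ‖m‖ := norm_le_pi_norm m i
    have h3 : |∑ j, hS.sqrt i j * w j| ≤ ∑ i', |∑ j, hS.sqrt i' j * w j| :=
      Finset.single_le_sum (f := fun i' => |∑ j, hS.sqrt i' j * w j|)
        (fun i' _ => abs_nonneg _) (Finset.mem_univ i)
    calc |m i + ∑ j, hS.sqrt i j * w j| ≤ |m i| + |∑ j, hS.sqrt i j * w j| := abs_add_le _ _
    _ ≤ ‖m‖ + ∑ i', |∑ j, hS.sqrt i' j * w j| := add_le_add h2 h3

lemma aux_mixture {α : Type*} [MeasurableSpace α] (ν1 ν2 : Measure α)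
    (a1 a2 : ℝ) (h1 : 0 ≤ a1) (h2 : 0 ≤ a2) (f : α → ℝ)
    (hf1 : Integrable f ν1) (hf2 : Integrable f ν2) :
    Integrable f (ENNReal.ofReal a1 • ν1 + ENNReal.ofReal a2 • ν2) ∧
    ∫ x, f x ∂(ENNReal.ofReal a1 • ν1 + ENNReal.ofReal a2 • ν2)
      = a1 * ∫ x, f x ∂ν1 + a2 * ∫ x, f x ∂ν2 := by
  have hs1 : Integrable f (ENNReal.ofReal a1 • ν1) := hf1.smul_measure ENNReal.ofReal_ne_top
  have hs2 : Integrable f (ENNReal.ofReal a2 • ν2) := hf2.smul_measure ENNReal.ofReal_ne_top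
  refine ⟨hs1.add_measure hs2, ?_⟩
  rw [integral_add_measure hs1 hs2, integral_smul_measure, integral_smul_measure,
    ENNReal.toReal_ofReal h1, ENNReal.toReal_ofReal h2, smul_eq_mul, smul_eq_mul]

lemma aux_cs_dot {p : ℕ} (x y : Fin p → ℝ) (hx : x ≠ 0) (hy : y ≠ 0) :
    (x ⬝ᵥ y) ^ 2 ≤ (x ⬝ᵥ x) * (y ⬝ᵥ y) ∧
    ((x ⬝ᵥ y) ^ 2 = (x ⬝ᵥ x) * (y ⬝ᵥ y) ↔ ∃ r : ℝ, r ≠ 0 ∧ y = r • x) := by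
  set X : EuclideanSpace ℝ (Fin p) := (WithLp.equiv 2 (Fin p → ℝ)).symm x with hX
  set Y : EuclideanSpace ℝ (Fin p) := (WithLp.equiv 2 (Fin p → ℝ)).symm y with hY
  have hiXY : (inner ℝ X Y : ℝ) = x ⬝ᵥ y := by
    simp [PiLp.inner_apply, hX, hY, dotProduct, mul_comm]
  have hiXX : (inner ℝ X X : ℝ) = x ⬝ᵥ x := by
    simp [PiLp.inner_apply, hX, dotProduct, mul_comm, EuclideanSpace.norm_sq_eq, sq_abs, ← pow_two]
  have hiYY : (inner ℝ Y Y : ℝ) = y ⬝ᵥ y := by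
    simp [PiLp.inner_apply, hY, dotProduct, mul_comm, EuclideanSpace.norm_sq_eq, sq_abs, ← pow_two]
  have hX0 : X ≠ 0 := by
    intro h; apply hx; funext i
    have := congrFun (congrArg (WithLp.equiv 2 (Fin p → ℝ)) h) i
    simpa [hX] using this
  have hY0 : Y ≠ 0 := by
    intro h; apply hy; funext i
    have := congrFun (congrArg (WithLp.equiv 2 (Fin p → ℝ)) h) i
    simpa [hY] using this
  have hineq := real_inner_mul_inner_self_le X Y
  rw [hiXY, hiXX, hiYY] at hineq
  constructor
  · calc (x ⬝ᵥ y) ^ 2 = (x ⬝ᵥ y) * (x ⬝ᵥ y) := sq (x ⬝ᵥ y) ▸ by ring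
    _ ≤ (x ⬝ᵥ x) * (y ⬝ᵥ y) := hineq
  · constructor
    · intro h
      have habs : ‖(inner ℝ X Y : ℝ)‖ = ‖X‖ * ‖Y‖ := by
        have h1 : ‖(inner ℝ X Y : ℝ)‖ ^ 2 = (‖X‖ * ‖Y‖) ^ 2 := by
          rw [Real.norm_eq_abs, sq_abs, hiXY, mul_pow,
            ← real_inner_self_eq_norm_sq, ← real_inner_self_eq_norm_sq, hiXX, hiYY, h]
        have h2 : (0:ℝ) ≤ ‖X‖ * ‖Y‖ := by positivity
        nlinarith [norm_nonneg (inner ℝ X Y : ℝ)]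
      obtain ⟨r, hr, hYX⟩ := (norm_inner_eq_norm_iff hX0 hY0).1 habs
      refine ⟨r, hr, ?_⟩
      funext i
      have := congrFun (congrArg (WithLp.equiv 2 (Fin p → ℝ)) hYX) i
      simpa [hX, hY] using this
    · rintro ⟨r, hr, rfl⟩
      simp only [dotProduct_smul, smul_dotProduct, smul_eq_mul]
      ring

set_option maxHeartbeats 1000000 in
/-- under a two-component Gaussian mixture with `α₁ ∉ {1/2 ± 1/√12}`, the
squared excess kurtosis of projections is uniquely maximized at `± θ/‖θ‖`,
`θ = Σ⁻¹(μ₂ − μ₁)`. -/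
theorem stmt_14 (p : ℕ) (a1 a2 : ℝ) (ha1 : 0 < a1) (ha2 : 0 < a2) (hsum : a1 + a2 = 1)
    (m1 m2 : Fin p → ℝ) (hm : m1 ≠ m2)
    (S : Matrix (Fin p) (Fin p) ℝ) (hS : S.PosDef)
    (ha : a1 ≠ 1 / 2 - 1 / Real.sqrt 12 ∧ a1 ≠ 1 / 2 + 1 / Real.sqrt 12) :
    let μ := ENNReal.ofReal a1 • mvGaussian m1 hS.posSemidef
        + ENNReal.ofReal a2 • mvGaussian m2 hS.posSemidef
    let m := ∫ z, z ∂μ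
    let κ := fun u : Fin p → ℝ =>
      (∫ z, (u ⬝ᵥ (z - m)) ^ 4 ∂μ) / (∫ z, (u ⬝ᵥ (z - m)) ^ 2 ∂μ) ^ 2
    let θ := S⁻¹.mulVec (m2 - m1)
    let θn := (Real.sqrt (∑ i, θ i ^ 2))⁻¹ • θ
    ∀ u : Fin p → ℝ, (∑ i, u i ^ 2) = 1 →
      (κ u - 3) ^ 2 ≤ (κ θn - 3) ^ 2 ∧
      ((κ u - 3) ^ 2 = (κ θn - 3) ^ 2 ↔ u = θn ∨ u = -θn) := by
  have ha2' : a2 = 1 - a1 := by linarith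
  subst ha2'
  intro μ m κ θ θn u hu
  have hμdef : μ = ENNReal.ofReal a1 • mvGaussian m1 hS.posSemidef
      + ENNReal.ofReal (1 - a1) • mvGaussian m2 hS.posSemidef := rfl
  have hκdef : ∀ w : Fin p → ℝ, κ w
      = (∫ z, (w ⬝ᵥ (z - m)) ^ 4 ∂μ) / (∫ z, (w ⬝ᵥ (z - m)) ^ 2 ∂μ) ^ 2 := fun w => rfl
  have hθdef : θ = S⁻¹.mulVec (m2 - m1) := rfl
  have hθndef : θn = (Real.sqrt (∑ i, θ i ^ 2))⁻¹ • θ := rfl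
  -- basic positivity and algebra facts
  have hβpos : 0 < a1 * (1 - a1) := mul_pos ha1 ha2
  have hβ6 : 1 - 6 * (a1 * (1 - a1)) ≠ 0 := by
    intro h
    have h112 : (1 / Real.sqrt 12) ^ 2 = 1 / 12 := by
      rw [div_pow, one_pow, Real.sq_sqrt (by norm_num : (0:ℝ) ≤ 12)]
    have hfac : (a1 - 1/2 - 1/Real.sqrt 12) * (a1 - 1/2 + 1/Real.sqrt 12) = 0 := by
      nlinarith [h112]
    rcases mul_eq_zero.1 hfac with h' | h'
    · exact ha.2 (by linarith)
    · exact ha.1 (by linarith)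
  have hCne : a1 * (1 - a1) * (1 - 6 * (a1 * (1 - a1))) ≠ 0 :=
    mul_ne_zero (ne_of_gt hβpos) hβ6
  have hq : ∀ w : Fin p → ℝ, w ≠ 0 → 0 < w ⬝ᵥ S.mulVec w := by
    intro w hw
    have := hS.dotProduct_mulVec_pos hw
    simpa using this
  have hSsymm : Sᵀ = S := by
    have h := hS.1
    rw [Matrix.IsHermitian] at h
    simpa [Matrix.conjTranspose_eq_transpose_of_trivial] using h
  have hdet : IsUnit S.det := isUnit_iff_ne_zero.2 (ne_of_gt hS.det_pos)
  have hθS : S.mulVec θ = m2 - m1 := by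
    rw [hθdef, mulVec_mulVec, Matrix.mul_nonsing_inv _ hdet, one_mulVec]
  have hdv0 : m2 - m1 ≠ 0 := sub_ne_zero.2 (Ne.symm hm)
  have hθ0 : θ ≠ 0 := by
    intro h; apply hdv0; rw [← hθS, h, mulVec_zero]
  set R := θ ⬝ᵥ S.mulVec θ with hR
  have hRpos : 0 < R := hq θ hθ0
  have hθd : θ ⬝ᵥ (m2 - m1) = R := by rw [hR, hθS]
  have hsθ : 0 < ∑ i, θ i ^ 2 := by
    obtain ⟨i, hi⟩ := Function.ne_iff.1 hθ0
    exact Finset.sum_pos' (fun j _ => sq_nonneg _)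
      ⟨i, Finset.mem_univ i, lt_of_le_of_ne (sq_nonneg _) (Ne.symm (pow_ne_zero 2 hi))⟩
  have hsq'pos : 0 < Real.sqrt (∑ i, θ i ^ 2) := Real.sqrt_pos.2 hsθ
  have hsq'2 : (Real.sqrt (∑ i, θ i ^ 2)) ^ 2 = ∑ i, θ i ^ 2 := Real.sq_sqrt hsθ.le
  have hu0 : u ≠ 0 := by
    intro h; rw [h] at hu; simp at hu
  have hθnunit : (∑ i, θn i ^ 2) = 1 := by
    rw [hθndef]
    simp only [Pi.smul_apply, smul_eq_mul, mul_pow, ← Finset.mul_sum]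
    rw [← hsq'2]
    field_simp
    rw [hsq'2, hsq'2]
  have hθn0 : θn ≠ 0 := by
    intro h; rw [h] at hθnunit; simp at hθnunit
  -- the mean
  have hIμ : Integrable (fun z : Fin p → ℝ => z) μ :=
    ((aux_integrable_id_mvGaussian m1 hS.posSemidef).smul_measure
        ENNReal.ofReal_ne_top).add_measure
      ((aux_integrable_id_mvGaussian m2 hS.posSemidef).smul_measure ENNReal.ofReal_ne_top)
  have hmidot : ∀ w : Fin p → ℝ, w ⬝ᵥ m = a1 * (w ⬝ᵥ m1) + (1 - a1) * (w ⬝ᵥ m2) := by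
    intro w
    have hproj : ∀ i, Integrable (fun z : Fin p → ℝ => z i) μ := fun i =>
      (ContinuousLinearMap.proj (R := ℝ) (φ := fun _ : Fin p => ℝ) i).integrable_comp hIμ
    have hmi : ∀ i, m i = ∫ z, z i ∂μ := by
      intro i
      have h := (ContinuousLinearMap.proj (R := ℝ)
        (φ := fun _ : Fin p => ℝ) i).integral_comp_comm hIμ
      exact h.symm
    calc w ⬝ᵥ m = ∑ i, w i * m i := rfl
    _ = ∑ i, ∫ z, w i * z i ∂μ := by
        refine Finset.sum_congr rfl fun i _ => ?_
        rw [hmi i, ← integral_const_mul]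
    _ = ∫ z, ∑ i, w i * z i ∂μ :=
        (integral_finset_sum _ fun i _ => (hproj i).const_mul _).symm
    _ = ∫ z, (w ⬝ᵥ z + 0) ^ 1 ∂μ := by
        congr 1; funext z; simp [dotProduct]
    _ = a1 * (∫ z, (w ⬝ᵥ z + 0) ^ 1 ∂(mvGaussian m1 hS.posSemidef))
        + (1 - a1) * ∫ z, (w ⬝ᵥ z + 0) ^ 1 ∂(mvGaussian m2 hS.posSemidef) := by
        rw [hμdef]
        exact (aux_mixture _ _ a1 (1 - a1) ha1.le ha2.le _
          (aux_mvGaussian_moments m1 hS.posSemidef w 0 1 (by norm_num)).1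
          (aux_mvGaussian_moments m2 hS.posSemidef w 0 1 (by norm_num)).1).2
    _ = a1 * (w ⬝ᵥ m1) + (1 - a1) * (w ⬝ᵥ m2) := by
        rw [(aux_mvGaussian_moments m1 hS.posSemidef w 0 1 (by norm_num)).2,
          (aux_mvGaussian_moments m2 hS.posSemidef w 0 1 (by norm_num)).2]
        simp [sm]
  -- moments of projections under the mixture
  have hM : ∀ (w : Fin p → ℝ) (k : ℕ), k ≤ 4 →
      ∫ z, (w ⬝ᵥ (z - m)) ^ k ∂μ
        = a1 * sm k (w ⬝ᵥ m1 + -(w ⬝ᵥ m)) (w ⬝ᵥ S.mulVec w)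
          + (1 - a1) * sm k (w ⬝ᵥ m2 + -(w ⬝ᵥ m)) (w ⬝ᵥ S.mulVec w) := by
    intro w k hk
    have hrw : ∀ z : Fin p → ℝ, (w ⬝ᵥ (z - m)) ^ k = (w ⬝ᵥ z + -(w ⬝ᵥ m)) ^ k := by
      intro z; rw [dotProduct_sub, sub_eq_add_neg]
    simp_rw [hrw]
    rw [hμdef]
    rw [(aux_mixture _ _ a1 (1 - a1) ha1.le ha2.le _
      (aux_mvGaussian_moments m1 hS.posSemidef w (-(w ⬝ᵥ m)) k hk).1
      (aux_mvGaussian_moments m2 hS.posSemidef w (-(w ⬝ᵥ m)) k hk).1).2,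
      (aux_mvGaussian_moments m1 hS.posSemidef w (-(w ⬝ᵥ m)) k hk).2,
      (aux_mvGaussian_moments m2 hS.posSemidef w (-(w ⬝ᵥ m)) k hk).2]
  -- the kurtosis formula
  have hκ3 : ∀ w : Fin p → ℝ, w ≠ 0 →
      κ w - 3 = (a1 * (1 - a1) * (1 - 6 * (a1 * (1 - a1))))
        * ((w ⬝ᵥ (m2 - m1)) ^ 2
          / (w ⬝ᵥ S.mulVec w + (a1 * (1 - a1)) * (w ⬝ᵥ (m2 - m1)) ^ 2)) ^ 2 := by
    intro w hw
    have hqpos := hq w hw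
    have hb1 : w ⬝ᵥ m1 + -(w ⬝ᵥ m) = -((1 - a1) * (w ⬝ᵥ (m2 - m1))) := by
      rw [hmidot w, dotProduct_sub]; ring
    have hb2 : w ⬝ᵥ m2 + -(w ⬝ᵥ m) = a1 * (w ⬝ᵥ (m2 - m1)) := by
      rw [hmidot w, dotProduct_sub]; ring
    have hM2 : ∫ z, (w ⬝ᵥ (z - m)) ^ 2 ∂μ
        = w ⬝ᵥ S.mulVec w + (a1 * (1 - a1)) * (w ⬝ᵥ (m2 - m1)) ^ 2 := by
      rw [hM w 2 (by norm_num), hb1, hb2]; simp only [sm]; ring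
    have hM4 : ∫ z, (w ⬝ᵥ (z - m)) ^ 4 ∂μ
        = 3 * (w ⬝ᵥ S.mulVec w) ^ 2
          + 6 * (a1 * (1 - a1)) * (w ⬝ᵥ S.mulVec w) * (w ⬝ᵥ (m2 - m1)) ^ 2
          + (a1 * (1 - a1)) * (1 - 3 * (a1 * (1 - a1))) * (w ⬝ᵥ (m2 - m1)) ^ 4 := by
      rw [hM w 4 (by norm_num), hb1, hb2]; simp only [sm]; ring
    have hM2pos : 0 < w ⬝ᵥ S.mulVec w + (a1 * (1 - a1)) * (w ⬝ᵥ (m2 - m1)) ^ 2 :=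
      add_pos_of_pos_of_nonneg hqpos (by positivity)
    rw [hκdef, hM2, hM4]
    field_simp
    ring
  -- Cauchy–Schwarz via the square root of S
  have hAsymm : (hS.posSemidef.sqrt)ᵀ = hS.posSemidef.sqrt := by
    have h := hS.posSemidef.posSemidef_sqrt.1
    rw [Matrix.IsHermitian] at h
    simpa [Matrix.conjTranspose_eq_transpose_of_trivial] using h
  have hAA : ∀ x y : Fin p → ℝ,
      (hS.posSemidef.sqrt.mulVec x) ⬝ᵥ (hS.posSemidef.sqrt.mulVec y) = x ⬝ᵥ S.mulVec y := by
    intro x y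
    rw [dotProduct_mulVec, ← mulVec_transpose, hAsymm, mulVec_mulVec,
      hS.posSemidef.sqrt_mul_self]
    conv_rhs => rw [dotProduct_mulVec, ← mulVec_transpose, hSsymm]
  have hx0 : hS.posSemidef.sqrt.mulVec u ≠ 0 := by
    intro h
    have h2 := hAA u u
    rw [h] at h2
    simp at h2
    linarith [hq u hu0]
  have hy0 : hS.posSemidef.sqrt.mulVec θ ≠ 0 := by
    intro h
    have h2 := hAA θ θ
    rw [h] at h2
    simp at h2
    rw [← hR] at h2
    linarith
  obtain ⟨hcs_le, hcs_iff⟩ := aux_cs_dot (hS.posSemidef.sqrt.mulVec u)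
    (hS.posSemidef.sqrt.mulVec θ) hx0 hy0
  rw [hAA, hAA, hAA, hθS, hθd] at hcs_le hcs_iff
  -- notation
  set d := u ⬝ᵥ (m2 - m1) with hd
  set q := u ⬝ᵥ S.mulVec u with hqd
  have hqpos : 0 < q := hq u hu0
  have hMupos : 0 < q + (a1 * (1 - a1)) * d ^ 2 := add_pos_of_pos_of_nonneg hqpos (by positivity)
  have hden1 : 0 < 1 + (a1 * (1 - a1)) * R := by nlinarith [mul_pos hβpos hRpos]
  -- value at θn
  have hdθn : θn ⬝ᵥ (m2 - m1) = (Real.sqrt (∑ i, θ i ^ 2))⁻¹ * R := by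
    rw [hθndef, smul_dotProduct, hθd, smul_eq_mul]
  have hqθn : θn ⬝ᵥ S.mulVec θn = ((Real.sqrt (∑ i, θ i ^ 2))⁻¹) ^ 2 * R := by
    rw [hθndef, smul_dotProduct, mulVec_smul, dotProduct_smul, ← hR]
    simp [smul_eq_mul]; ring
  have hGθn : (θn ⬝ᵥ (m2 - m1)) ^ 2
      / (θn ⬝ᵥ S.mulVec θn + (a1 * (1 - a1)) * (θn ⬝ᵥ (m2 - m1)) ^ 2)
      = R / (1 + (a1 * (1 - a1)) * R) := by
    rw [hdθn, hqθn, mul_pow]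
    have hcpos : 0 < ((Real.sqrt (∑ i, θ i ^ 2))⁻¹) ^ 2 := by positivity
    have hd1 : 0 < ((Real.sqrt (∑ i, θ i ^ 2))⁻¹) ^ 2 * R
        + a1 * (1 - a1) * (((Real.sqrt (∑ i, θ i ^ 2))⁻¹) ^ 2 * R ^ 2) := by
      have := mul_pos hcpos hRpos
      have := mul_pos (mul_pos hβpos hcpos) (mul_pos hRpos hRpos)
      nlinarith
    rw [div_eq_div_iff (ne_of_gt hd1) (ne_of_gt hden1)]
    ring
  -- comparison
  have hGu_nonneg : 0 ≤ d ^ 2 / (q + (a1 * (1 - a1)) * d ^ 2) :=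
    div_nonneg (sq_nonneg _) hMupos.le
  have hGθ_nonneg : 0 ≤ R / (1 + (a1 * (1 - a1)) * R) := div_nonneg hRpos.le hden1.le
  have hGle : d ^ 2 / (q + (a1 * (1 - a1)) * d ^ 2) ≤ R / (1 + (a1 * (1 - a1)) * R) := by
    rw [div_le_div_iff₀ hMupos hden1]
    nlinarith [hcs_le, hβpos]
  have hEu : (κ u - 3) ^ 2 = (a1 * (1 - a1) * (1 - 6 * (a1 * (1 - a1)))) ^ 2
      * (d ^ 2 / (q + (a1 * (1 - a1)) * d ^ 2)) ^ 4 := by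
    rw [hκ3 u hu0]; ring
  have hEθn : (κ θn - 3) ^ 2 = (a1 * (1 - a1) * (1 - 6 * (a1 * (1 - a1)))) ^ 2
      * (R / (1 + (a1 * (1 - a1)) * R)) ^ 4 := by
    rw [hκ3 θn hθn0, hGθn]; ring
  constructor
  · rw [hEu, hEθn]
    exact mul_le_mul_of_nonneg_left (pow_le_pow_left₀ hGu_nonneg hGle 4) (sq_nonneg _)
  · constructor
    · intro hEq
      rw [hEu, hEθn] at hEq
      have h4 : (d ^ 2 / (q + (a1 * (1 - a1)) * d ^ 2)) ^ 4
          = (R / (1 + (a1 * (1 - a1)) * R)) ^ 4 :=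
        mul_left_cancel₀ (pow_ne_zero 2 hCne) hEq
      have hGeq : d ^ 2 / (q + (a1 * (1 - a1)) * d ^ 2) = R / (1 + (a1 * (1 - a1)) * R) := by
        rcases lt_or_eq_of_le hGle with hlt | heq
        · exact absurd h4 (ne_of_lt (pow_lt_pow_left₀ hlt hGu_nonneg (by norm_num)))
        · exact heq
      have hdq : d ^ 2 = q * R := by
        rw [div_eq_div_iff (ne_of_gt hMupos) (ne_of_gt hden1)] at hGeq
        nlinarith [hGeq]
      obtain ⟨r, hr, hy⟩ := hcs_iff.1 hdq
      have hz : hS.posSemidef.sqrt.mulVec (θ - r • u) = 0 := by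
        rw [mulVec_sub, mulVec_smul, hy]; simp
      have hθru : θ = r • u := by
        by_contra hne
        have hzne : θ - r • u ≠ 0 := sub_ne_zero.2 hne
        have := hq _ hzne
        rw [← hAA, hz] at this
        simp at this
      have hsr : (∑ i, θ i ^ 2) = r ^ 2 := by
        rw [hθru]
        simp only [Pi.smul_apply, smul_eq_mul, mul_pow, ← Finset.mul_sum, hu, mul_one]
      have habs : Real.sqrt (∑ i, θ i ^ 2) = |r| := by
        rw [hsr, Real.sqrt_sq_eq_abs]
      rcases lt_or_gt_of_ne hr with hneg | hpos
      · right
        rw [hθndef, habs, hθru, abs_of_neg hneg, smul_smul]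
        have : (-r)⁻¹ * r = -1 := by field_simp
        rw [this]
        simp
      · left
        rw [hθndef, habs, hθru, abs_of_pos hpos, smul_smul, inv_mul_cancel₀ hr, one_smul]
    · intro h
      rcases h with h | h
      · rw [h]
      · rw [h, hκ3 _ (neg_ne_zero.2 hθn0), hκ3 θn hθn0]
        simp only [neg_dotProduct, mulVec_neg, dotProduct_neg, dotProduct_sub, neg_sub, neg_neg]
        ring_nf
end
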